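/- Let α ∈ (0,1] and let φ : ℝ → ℂ be Hölder continuous of exponent α with compact support. Define f : ℂ ∖ ℝ → ℂ by f(z) = (1/(2πi))·∫_ℝ φ(t)/(t − z) dt. Then: (i) f is complex differentiable (holomorphic) at every z with Im z ≠ 0; (ii) f(z) → 0 as |z| → ∞; (iii) for every x ∈ ℝ the one-sided limits f₊(x) = lim_{ε→0⁺} f(x + iε) and f₋(x) = lim_{ε→0⁺} f(x − iε) exist, and f₊(x) − f₋(x) = φ(x). -/

import Mathlib

open MeasureTheory Filter Set Complex Metric
open MeasureTheory Filter Set Complex intervalIntegral Metric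

lemma holder_cont {φ : ℝ → ℂ} {C α : ℝ} (hα : 0 < α)
    (hC : ∀ x y : ℝ, ‖φ x - φ y‖ ≤ C * |x - y| ^ α) : Continuous φ := by
  rw [continuous_iff_continuousAt]
  intro x
  rw [ContinuousAt, tendsto_iff_norm_sub_tendsto_zero]
  have hb : Filter.Tendsto (fun y : ℝ => C * |y - x| ^ α) (nhds x) (nhds 0) := by
    have h1 : Filter.Tendsto (fun y : ℝ => |y - x|) (nhds x) (nhds 0) := by
      have hc : Continuous (fun y : ℝ => |y - x|) := (continuous_id.sub continuous_const).abs
      simpa using hc.tendsto x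
    have h2 : Filter.Tendsto (fun s : ℝ => C * s ^ α) (nhds 0) (nhds 0) := by
      have h3 : Filter.Tendsto (fun s : ℝ => s ^ α) (nhds 0) (nhds ((0:ℝ) ^ α)) :=
        (Real.continuousAt_rpow_const 0 α (Or.inr hα.le)).tendsto
      rw [Real.zero_rpow hα.ne'] at h3
      simpa using h3.const_mul C
    exact h2.comp h1
  exact squeeze_zero (fun y => norm_nonneg _) (fun y => hC y x) hb

lemma denom_ne {z : ℂ} (hz : z.im ≠ 0) (t : ℝ) : ((t:ℂ) - z) ≠ 0 := by
  intro h
  rw [sub_eq_zero] at h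
  apply hz; rw [← h]; simp

lemma integrable_cauchy {φ : ℝ → ℂ} (hφ : Continuous φ) (hsupp : HasCompactSupport φ)
    {z : ℂ} (hz : z.im ≠ 0) : Integrable (fun t : ℝ => φ t / ((t:ℂ) - z)) := by
  have hcont : Continuous (fun t : ℝ => φ t / ((t:ℂ) - z)) :=
    hφ.div (by continuity) (denom_ne hz)
  have hcs : HasCompactSupport (fun t : ℝ => φ t / ((t:ℂ) - z)) := by
    apply hsupp.mono
    intro t ht
    simp only [Function.mem_support, ne_eq] at ht ⊢
    intro h0
    exact ht (by rw [h0, zero_div])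
  exact hcont.integrable_of_hasCompactSupport hcs

-- FTC evaluation of the kernel integral
lemma kernel_integral {z : ℂ} (hz : z.im ≠ 0) (R : ℝ) :
    ∫ t in (-R)..R, ((t:ℂ) - z)⁻¹ =
      Complex.log ((R:ℂ) - z) - Complex.log (-(R:ℂ) - z) := by
  have hmem : ∀ t : ℝ, ((t:ℂ) - z) ∈ Complex.slitPlane := by
    intro t
    rw [Complex.mem_slitPlane_iff]
    right; simp [hz]
  have hderiv : ∀ t : ℝ, t ∈ Set.uIcc (-R) R →
      HasDerivAt (fun t : ℝ => Complex.log ((t:ℂ) - z)) (((t:ℂ) - z)⁻¹) t := by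
    intro t _
    have h1 : HasDerivAt (fun w : ℂ => Complex.log (w - z)) (((t:ℂ) - z)⁻¹) (t:ℂ) := by
      have h2 : HasDerivAt (fun w : ℂ => w - z) 1 (t:ℂ) := (hasDerivAt_id _).sub_const z
      have h3 := (Complex.hasDerivAt_log (hmem t)).comp (t:ℂ) h2
      rw [mul_one] at h3
      exact h3
    exact h1.comp_ofReal
  have hint : IntervalIntegrable (fun t : ℝ => ((t:ℂ) - z)⁻¹) volume (-R) R :=
    ((Complex.continuous_ofReal.sub continuous_const).inv₀
      (fun t => by
        intro h; simp only [Pi.sub_apply, sub_eq_zero] at h; apply hz; rw [← h]; simp)).intervalIntegrable _ _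
  have := intervalIntegral.integral_eq_sub_of_hasDerivAt hderiv hint
  rw [this]
  push_cast
  ring_nf

-- integrability of the Hölder bound
lemma bound_integrable_on {α : ℝ} (hα1 : 0 < α) (x R : ℝ) (hR1 : -R ≤ x) (hR2 : x ≤ R) (C : ℝ) :
    IntegrableOn (fun t : ℝ => C * |t - x| ^ (α - 1)) (Set.Ioc (-R) R) := by
  have key : IntegrableOn (fun t : ℝ => |t - x| ^ (α - 1)) (Set.Ioc (-R) R) := by
    have hsplit : Set.Ioc (-R) R = Set.Ioc (-R) x ∪ Set.Ioc x R :=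
      (Set.Ioc_union_Ioc_eq_Ioc hR1 hR2).symm
    rw [hsplit]
    apply IntegrableOn.union
    · -- on Ioc (-R) x : |t - x| = x - t
      have h1 : IntervalIntegrable (fun t : ℝ => (x - t) ^ (α - 1)) volume (-R) x := by
        have h0 : IntervalIntegrable (fun s : ℝ => s ^ (α - 1)) volume 0 (x + R) :=
          intervalIntegral.intervalIntegrable_rpow' (by linarith)
        have := (h0.comp_sub_left x).symm
        simpa using this
      have h2 : IntegrableOn (fun t : ℝ => (x - t) ^ (α - 1)) (Set.Ioc (-R) x) :=
        (intervalIntegrable_iff_integrableOn_Ioc_of_le hR1).mp h1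
      apply h2.congr_fun _ measurableSet_Ioc
      intro t ht
      simp only []
      rw [_root_.abs_of_nonpos (by linarith [ht.2] : t - x ≤ 0), neg_sub]
    · have h1 : IntervalIntegrable (fun t : ℝ => (t - x) ^ (α - 1)) volume x R := by
        have h0 : IntervalIntegrable (fun s : ℝ => s ^ (α - 1)) volume 0 (R - x) :=
          intervalIntegral.intervalIntegrable_rpow' (by linarith)
        have := h0.comp_sub_right x
        simpa using this
      have h2 : IntegrableOn (fun t : ℝ => (t - x) ^ (α - 1)) (Set.Ioc x R) :=
        (intervalIntegrable_iff_integrableOn_Ioc_of_le hR2).mp h1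
      apply h2.congr_fun _ measurableSet_Ioc
      intro t ht
      simp only []
      rw [_root_.abs_of_nonneg (by linarith [ht.1] : (0:ℝ) ≤ t - x)]
  exact key.const_mul C


lemma holder_dct {φ : ℝ → ℂ} {C α : ℝ} (hα1 : 0 < α) (hφ : Continuous φ)
    (hC : ∀ x y : ℝ, ‖φ x - φ y‖ ≤ C * |x - y| ^ α) (hC0 : 0 ≤ C)
    (x R : ℝ) (hR1 : -R ≤ x) (hR2 : x ≤ R) (σ : ℝ) (hσ : σ = 1 ∨ σ = -1) :
    Filter.Tendsto
      (fun ε : ℝ => ∫ t in Set.Ioc (-R) R, (φ t - φ x) / ((t:ℂ) - ((x:ℂ) + σ*ε*Complex.I)))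
      (nhdsWithin 0 (Set.Ioi 0))
      (nhds (∫ t in Set.Ioc (-R) R, (φ t - φ x) / ((t:ℂ) - x))) := by
  have hσ0 : σ ≠ 0 := by rcases hσ with h | h <;> rw [h] <;> norm_num
  apply MeasureTheory.tendsto_integral_filter_of_dominated_convergence (fun t => C * |t - x| ^ (α - 1))
  · -- measurability
    filter_upwards [self_mem_nhdsWithin] with ε hε
    have him : ((x:ℂ) + σ*ε*Complex.I).im ≠ 0 := by
      simp only [Complex.add_im, Complex.ofReal_im, Complex.mul_im, Complex.mul_re,
        Complex.ofReal_re, Complex.I_im, Complex.I_re]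
      simp
      constructor
      · exact hσ0
      · exact ne_of_gt hε
    have hden : ∀ t : ℝ, ((t:ℂ) - ((x:ℂ) + σ*ε*Complex.I)) ≠ 0 := by
      intro t h
      rw [sub_eq_zero] at h
      apply him; rw [← h]; simp
    exact (((hφ.sub continuous_const).div (by continuity) hden)).aestronglyMeasurable
  · -- bound
    filter_upwards [self_mem_nhdsWithin] with ε hε
    apply ae_of_all
    intro t
    by_cases htx : t = x
    · subst htx
      simp only [sub_self, zero_div, norm_zero]
      positivity
    · rw [norm_div]
      have hre : ((t:ℂ) - ((x:ℂ) + σ*ε*Complex.I)).re = t - x := by simp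
      have habs : |t - x| ≤ ‖(t:ℂ) - ((x:ℂ) + σ*ε*Complex.I)‖ := by
        rw [← hre]
        exact Complex.abs_re_le_norm _
      have htx0 : (0:ℝ) < |t - x| := abs_pos.mpr (sub_ne_zero.mpr htx)
      have h1 : ‖φ t - φ x‖ / ‖(t:ℂ) - ((x:ℂ) + σ*ε*Complex.I)‖ ≤ (C * |t - x| ^ α) / |t - x| :=
        div_le_div₀ (by positivity) (hC t x) htx0 habs
      refine h1.trans (le_of_eq ?_)
      rw [Real.rpow_sub htx0, Real.rpow_one, mul_div_assoc]
  · exact bound_integrable_on hα1 x R hR1 hR2 C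
  · -- pointwise limit
    have hae : ∀ᵐ t : ℝ ∂(volume.restrict (Set.Ioc (-R) R)), t ≠ x := by
      apply ae_restrict_of_ae
      have hx0 : volume ({x} : Set ℝ) = 0 := measure_singleton x
      rw [ae_iff]
      simpa only [ne_eq, not_not, Set.setOf_eq_eq_singleton] using hx0
    filter_upwards [hae] with t ht
    have hd : Filter.Tendsto (fun ε : ℝ => (t:ℂ) - ((x:ℂ) + σ*ε*Complex.I)) (nhds 0)
        (nhds ((t:ℂ) - (x:ℂ))) := by
      have hc : Continuous (fun ε : ℝ => (t:ℂ) - ((x:ℂ) + σ*ε*Complex.I)) := by continuity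
      have := hc.tendsto 0
      simpa using this
    have hne : ((t:ℂ) - (x:ℂ)) ≠ 0 := sub_ne_zero.mpr (by exact_mod_cast ht)
    exact (Filter.Tendsto.div tendsto_const_nhds hd hne).mono_left nhdsWithin_le_nhds

lemma log_limit (x R : ℝ) (hxR1 : -R < x) (hxR2 : x < R) (σ : ℝ) (hσ : σ = 1 ∨ σ = -1) :
    Filter.Tendsto (fun ε : ℝ => Complex.log ((R:ℂ) - ((x:ℂ) + σ*ε*Complex.I))
        - Complex.log (-(R:ℂ) - ((x:ℂ) + σ*ε*Complex.I)))
      (nhdsWithin 0 (Set.Ioi 0))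
      (nhds (((Real.log (R - x) : ℂ)) - ((Real.log (R + x) : ℂ) - σ*(Real.pi:ℂ)*Complex.I))) := by
  have hRx : (0:ℝ) < R - x := by linarith
  have hRx' : (0:ℝ) < R + x := by linarith
  -- first part
  have h1 : Filter.Tendsto (fun ε : ℝ => Complex.log ((R:ℂ) - ((x:ℂ) + σ*ε*Complex.I)))
      (nhdsWithin 0 (Set.Ioi 0)) (nhds ((Real.log (R - x) : ℂ))) := by
    have hm : Filter.Tendsto (fun ε : ℝ => (R:ℂ) - ((x:ℂ) + σ*ε*Complex.I)) (nhds 0)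
        (nhds ((R:ℂ) - (x:ℂ))) := by
      have hc : Continuous (fun ε : ℝ => (R:ℂ) - ((x:ℂ) + σ*ε*Complex.I)) := by continuity
      simpa using hc.tendsto 0
    have hslit : ((R:ℂ) - (x:ℂ)) ∈ Complex.slitPlane := by
      rw [Complex.mem_slitPlane_iff]
      left; simp [hRx]
    have := (continuousAt_clog hslit).tendsto.comp hm
    have hval : Complex.log ((R:ℂ) - (x:ℂ)) = (Real.log (R - x) : ℂ) := by
      rw [← Complex.ofReal_sub, ← Complex.ofReal_log hRx.le]
    rw [hval] at this
    exact this.mono_left nhdsWithin_le_nhds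
  -- second part
  have h2 : Filter.Tendsto (fun ε : ℝ => Complex.log (-(R:ℂ) - ((x:ℂ) + σ*ε*Complex.I)))
      (nhdsWithin 0 (Set.Ioi 0)) (nhds ((Real.log (R + x) : ℂ) - σ*(Real.pi:ℂ)*Complex.I)) := by
    have hz : (-(R:ℂ) - (x:ℂ)) = ((-(R+x) : ℝ) : ℂ) := by push_cast; ring
    have hre : (((-(R+x) : ℝ) : ℂ)).re < 0 := by simpa using by linarith
    have him : (((-(R+x) : ℝ) : ℂ)).im = 0 := by simp
    have habs : ‖((( -(R+x) : ℝ) : ℂ))‖ = R + x := by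
      rw [Complex.norm_real, Real.norm_eq_abs, abs_of_neg (by linarith)]; ring
    have hcont : Continuous (fun ε : ℝ => -(R:ℂ) - ((x:ℂ) + σ*ε*Complex.I)) := by continuity
    have hm0 : Filter.Tendsto (fun ε : ℝ => -(R:ℂ) - ((x:ℂ) + σ*ε*Complex.I)) (nhds 0)
        (nhds (((-(R+x) : ℝ) : ℂ))) := by
      rw [← hz]; simpa using hcont.tendsto 0
    rcases hσ with rfl | rfl
    · -- σ = 1 : approach from below, limit log|z| - πI
      have hmem : ∀ᶠ ε : ℝ in nhdsWithin 0 (Set.Ioi 0),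
          (-(R:ℂ) - ((x:ℂ) + (1:ℝ)*ε*Complex.I)) ∈ {w : ℂ | w.im < 0} := by
        filter_upwards [self_mem_nhdsWithin] with ε hε
        have him' : (-(R:ℂ) - ((x:ℂ) + ((1:ℝ):ℂ)*ε*Complex.I)).im = -ε := by simp
        show (-(R:ℂ) - ((x:ℂ) + ((1:ℝ):ℂ)*ε*Complex.I)).im < 0
        rw [him']
        linarith [Set.mem_Ioi.mp hε]
      have hm : Filter.Tendsto (fun ε : ℝ => -(R:ℂ) - ((x:ℂ) + ((1:ℝ):ℂ)*ε*Complex.I))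
          (nhdsWithin 0 (Set.Ioi 0)) (nhdsWithin (((-(R+x) : ℝ) : ℂ)) {w : ℂ | w.im < 0}) :=
        tendsto_nhdsWithin_iff.mpr ⟨hm0.mono_left nhdsWithin_le_nhds, hmem⟩
      have := (Complex.tendsto_log_nhdsWithin_im_neg_of_re_neg_of_im_zero hre him).comp hm
      rw [habs, Function.comp_def] at this
      convert this using 2 <;> push_cast <;> ring
    · -- σ = -1 : approach from above, limit log|z| + πI
      have hmem : ∀ᶠ ε : ℝ in nhdsWithin 0 (Set.Ioi 0),
          (-(R:ℂ) - ((x:ℂ) + ((-1:ℝ):ℂ)*ε*Complex.I)) ∈ {w : ℂ | 0 ≤ w.im} := by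
        filter_upwards [self_mem_nhdsWithin] with ε hε
        have him' : (-(R:ℂ) - ((x:ℂ) + ((-1:ℝ):ℂ)*ε*Complex.I)).im = ε := by simp
        show (0:ℝ) ≤ (-(R:ℂ) - ((x:ℂ) + ((-1:ℝ):ℂ)*ε*Complex.I)).im
        rw [him']
        linarith [Set.mem_Ioi.mp hε]
      have hm : Filter.Tendsto (fun ε : ℝ => -(R:ℂ) - ((x:ℂ) + ((-1:ℝ):ℂ)*ε*Complex.I))
          (nhdsWithin 0 (Set.Ioi 0)) (nhdsWithin (((-(R+x) : ℝ) : ℂ)) {w : ℂ | 0 ≤ w.im}) :=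
        tendsto_nhdsWithin_iff.mpr ⟨hm0.mono_left nhdsWithin_le_nhds, hmem⟩
      have := (Complex.tendsto_log_nhdsWithin_im_nonneg_of_re_neg_of_im_zero hre him).comp hm
      rw [habs, Function.comp_def] at this
      convert this using 2 <;> push_cast <;> ring
  simpa using h1.sub h2

lemma plemelj_side {φ : ℝ → ℂ} {C α : ℝ} (hα1 : 0 < α) (hφ : Continuous φ)
    (hC : ∀ x y : ℝ, ‖φ x - φ y‖ ≤ C * |x - y| ^ α) (hC0 : 0 ≤ C)
    (x R : ℝ) (hxR1 : -R < x) (hxR2 : x < R)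
    (hs : Function.support φ ⊆ Set.Ioc (-R) R) (σ : ℝ) (hσ : σ = 1 ∨ σ = -1) :
    Filter.Tendsto (fun ε : ℝ => ∫ t : ℝ, φ t / ((t:ℂ) - ((x:ℂ) + σ*ε*Complex.I)))
      (nhdsWithin 0 (Set.Ioi 0))
      (nhds ((∫ t in Set.Ioc (-R) R, (φ t - φ x) / ((t:ℂ) - x))
        + φ x * (((Real.log (R - x) : ℂ)) - ((Real.log (R + x) : ℂ)
            - σ*(Real.pi:ℂ)*Complex.I)))) := by
  have hσ0 : σ ≠ 0 := by rcases hσ with h | h <;> rw [h] <;> norm_num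
  have hRR : -R ≤ R := by linarith
  have key : ∀ ε : ℝ, 0 < ε →
      (∫ t : ℝ, φ t / ((t:ℂ) - ((x:ℂ) + σ*ε*Complex.I)))
        = (∫ t in Set.Ioc (-R) R, (φ t - φ x) / ((t:ℂ) - ((x:ℂ) + σ*ε*Complex.I)))
          + φ x * (Complex.log ((R:ℂ) - ((x:ℂ) + σ*ε*Complex.I))
              - Complex.log (-(R:ℂ) - ((x:ℂ) + σ*ε*Complex.I))) := by
    intro ε hε
    set z : ℂ := (x:ℂ) + σ*ε*Complex.I with hzdef
    have hzim : z.im ≠ 0 := by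
      have : z.im = σ * ε := by rw [hzdef]; simp
      rw [this]
      exact mul_ne_zero hσ0 (ne_of_gt hε)
    have hden := denom_ne hzim
    -- step 1 : restrict to Ioc (-R) R
    have step1 : (∫ t : ℝ, φ t / ((t:ℂ) - z))
        = ∫ t in Set.Ioc (-R) R, φ t / ((t:ℂ) - z) := by
      refine (setIntegral_eq_integral_of_forall_compl_eq_zero ?_).symm
      intro t ht
      have : φ t = 0 := Function.notMem_support.mp (fun hmem => ht (hs hmem))
      rw [this, zero_div]
    -- step 2 : to interval integral
    have step2 : (∫ t in Set.Ioc (-R) R, φ t / ((t:ℂ) - z))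
        = ∫ t in (-R)..R, φ t / ((t:ℂ) - z) := (intervalIntegral.integral_of_le hRR).symm
    -- step 3 : split
    have hint1 : IntervalIntegrable (fun t : ℝ => (φ t - φ x) / ((t:ℂ) - z)) volume (-R) R :=
      (((hφ.sub continuous_const).div (by continuity) hden)).intervalIntegrable _ _
    have hint2 : IntervalIntegrable (fun t : ℝ => φ x * ((t:ℂ) - z)⁻¹) volume (-R) R :=
      (continuous_const.mul ((Complex.continuous_ofReal.sub continuous_const).inv₀
        hden)).intervalIntegrable _ _
    have step3 : (∫ t in (-R)..R, φ t / ((t:ℂ) - z))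
        = (∫ t in (-R)..R, (φ t - φ x) / ((t:ℂ) - z))
          + φ x * ∫ t in (-R)..R, ((t:ℂ) - z)⁻¹ := by
      rw [← intervalIntegral.integral_const_mul, ← intervalIntegral.integral_add hint1 hint2]
      apply intervalIntegral.integral_congr
      intro t _
      simp only []
      rw [← div_eq_mul_inv, ← add_div, sub_add_cancel]
    rw [step1, step2, step3, kernel_integral hzim R, ← intervalIntegral.integral_of_le hRR]
  have h1 := holder_dct hα1 hφ hC hC0 x R (le_of_lt hxR1) (le_of_lt hxR2) σ hσ
  have h2 := (log_limit x R hxR1 hxR2 σ hσ).const_mul (φ x)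
  apply (h1.add h2).congr'
  filter_upwards [self_mem_nhdsWithin] with ε hε
  exact (key ε (Set.mem_Ioi.mp hε)).symm

lemma denom_ne'' {z : ℂ} (hz : z.im ≠ 0) (t : ℝ) : ((t:ℂ) - z) ≠ 0 := by
  intro h; rw [sub_eq_zero] at h; apply hz; rw [← h]; simp

lemma diff_cauchy {φ : ℝ → ℂ} (hφ : Continuous φ) (hsupp : HasCompactSupport φ)
    (hint : ∀ {z : ℂ}, z.im ≠ 0 → Integrable (fun t : ℝ => φ t / ((t:ℂ) - z)))
    {z₀ : ℂ} (hz : z₀.im ≠ 0) :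
    DifferentiableAt ℂ (fun z : ℂ => ∫ t : ℝ, φ t / ((t:ℂ) - z)) z₀ := by
  set δ : ℝ := |z₀.im| / 2 with hδdef
  have hδ0 : 0 < δ := by
    have : 0 < |z₀.im| := abs_pos.mpr hz
    positivity
  have him : ∀ z ∈ ball z₀ δ, δ ≤ |z.im| := by
    intro z hz'
    have h1 : |z.im - z₀.im| ≤ dist z z₀ := by
      rw [Complex.dist_eq]
      have h : z.im - z₀.im = (z - z₀).im := by simp
      rw [h]
      exact Complex.abs_im_le_norm _
    have h2 : dist z z₀ < δ := mem_ball.mp hz'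
    have h4 := abs_sub_abs_le_abs_sub z₀.im z.im
    rw [abs_sub_comm z₀.im z.im] at h4
    have hδ : |z₀.im| = 2 * δ := by rw [hδdef]; ring
    linarith
  have hballim : ∀ z ∈ ball z₀ δ, z.im ≠ 0 := by
    intro z hz'
    have := him z hz'
    intro h0
    rw [h0] at this
    simp at this
    linarith
  have hball : ∀ z ∈ ball z₀ δ, ∀ t : ℝ, δ ≤ ‖(t:ℂ) - z‖ := by
    intro z hz' t
    calc δ ≤ |z.im| := him z hz'
      _ = |((t:ℂ) - z).im| := by simp [abs_sub_comm]
      _ ≤ ‖(t:ℂ) - z‖ := Complex.abs_im_le_norm _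
  have main := _root_.hasDerivAt_integral_of_dominated_loc_of_deriv_le (μ := volume)
    (F := fun (z : ℂ) (t : ℝ) => φ t / ((t:ℂ) - z))
    (F' := fun (z : ℂ) (t : ℝ) => φ t / ((t:ℂ) - z) ^ 2)
    (x₀ := z₀) (bound := fun t : ℝ => ‖φ t‖ / δ ^ 2) (s := ball z₀ δ) (ball_mem_nhds z₀ hδ0)
    ?hmeas ?hint0 ?hmeas' ?hbound ?hbint ?hdiff
  · exact main.2.differentiableAt
  case hmeas =>
    filter_upwards [ball_mem_nhds z₀ hδ0] with z hz'
    exact ((hφ.div (by continuity) (denom_ne'' (hballim z hz')))).aestronglyMeasurable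
  case hint0 => exact hint hz
  case hmeas' =>
    have hc : Continuous (fun t : ℝ => φ t / ((t:ℂ) - z₀) ^ 2) :=
      hφ.div (by continuity) (fun t => pow_ne_zero 2 (denom_ne'' hz t))
    exact hc.aestronglyMeasurable
  case hbound =>
    apply ae_of_all
    intro t z hz'
    rw [norm_div, norm_pow]
    apply div_le_div_of_nonneg_left (norm_nonneg _) (by positivity)
    · calc δ ^ 2 = δ * δ := sq δ
        _ ≤ ‖(t:ℂ) - z‖ * ‖(t:ℂ) - z‖ :=
          mul_le_mul (hball z hz' t) (hball z hz' t) hδ0.le (norm_nonneg _)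
        _ = ‖(t:ℂ) - z‖ ^ 2 := (sq ‖(t:ℂ) - z‖).symm
  case hbint =>
    exact ((hφ.norm.integrable_of_hasCompactSupport hsupp.norm).div_const _)
  case hdiff =>
    apply ae_of_all
    intro t z hz'
    have h0 : HasDerivAt (fun z : ℂ => (t:ℂ) - z) (-1) z := by
      simpa using (hasDerivAt_id z).const_sub ((t:ℂ))
    have h1 : HasDerivAt (fun z : ℂ => ((t:ℂ) - z)⁻¹) (((t:ℂ) - z)^2)⁻¹ z := by
      have := h0.fun_inv (denom_ne'' (hballim z hz') t)
      rw [neg_neg, one_div] at this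
      exact this
    have h2 := h1.const_mul (φ t)
    have hfun : (fun z : ℂ => φ t / ((t:ℂ) - z)) = (fun z : ℂ => φ t * ((t:ℂ) - z)⁻¹) := by
      funext w; rw [div_eq_mul_inv]
    rw [hfun]
    show HasDerivAt _ (φ t / ((t:ℂ) - z) ^ 2) z
    rw [div_eq_mul_inv]
    exact h2

lemma cobounded_cauchy {φ : ℝ → ℂ} (hφ : Continuous φ) (hsupp : HasCompactSupport φ) :
    Filter.Tendsto (fun z : ℂ => ∫ t : ℝ, φ t / ((t:ℂ) - z)) (Bornology.cobounded ℂ)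
      (nhds 0) := by
  obtain ⟨R, hR⟩ := hsupp.isCompact.isBounded.subset_closedBall 0
  set A : ℝ := ∫ t : ℝ, ‖φ t‖ with hA
  have hA0 : 0 ≤ A := integral_nonneg (fun t => norm_nonneg _)
  have hnorm : Filter.Tendsto (fun z : ℂ => ‖z‖) (Bornology.cobounded ℂ) atTop :=
    tendsto_norm_cobounded_atTop
  have hev : ∀ᶠ z : ℂ in Bornology.cobounded ℂ, R + 1 ≤ ‖z‖ :=
    hnorm.eventually (eventually_ge_atTop (R + 1))
  apply squeeze_zero_norm' (a := fun z : ℂ => A / (‖z‖ - R))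
  · filter_upwards [hev] with z hz
    have hzR : 0 < ‖z‖ - R := by linarith
    have hpt : ∀ t : ℝ, ‖φ t / ((t:ℂ) - z)‖ ≤ ‖φ t‖ / (‖z‖ - R) := by
      intro t
      by_cases ht : φ t = 0
      · simp [ht]
      · have htmem : t ∈ tsupport φ := subset_tsupport φ ht
        have htR : |t| ≤ R := by
          have := hR htmem
          simpa [Real.dist_eq] using this
        have hden : ‖z‖ - R ≤ ‖(t:ℂ) - z‖ := by
          have h1 : ‖z‖ - ‖(t:ℂ)‖ ≤ ‖z - (t:ℂ)‖ := norm_sub_norm_le z ((t:ℂ))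
          rw [norm_sub_rev] at h1
          have h2 : ‖(t:ℂ)‖ ≤ R := by simpa using htR
          linarith
        rw [norm_div]
        exact div_le_div_of_nonneg_left (norm_nonneg _) hzR hden
    have hgint : Integrable (fun t : ℝ => ‖φ t‖ / (‖z‖ - R)) :=
      (hφ.norm.integrable_of_hasCompactSupport hsupp.norm).div_const _
    calc ‖∫ t : ℝ, φ t / ((t:ℂ) - z)‖ ≤ ∫ t : ℝ, ‖φ t‖ / (‖z‖ - R) :=
          norm_integral_le_of_norm_le hgint (ae_of_all _ hpt)
      _ = A / (‖z‖ - R) := by rw [MeasureTheory.integral_div]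
  · have h1 : Filter.Tendsto (fun s : ℝ => A / (s - R)) atTop (nhds 0) := by
      apply Filter.Tendsto.div_atTop (tendsto_const_nhds)
      exact tendsto_atTop_add_const_right atTop (-R) tendsto_id |>.congr
        (fun s => by simp [sub_eq_add_neg, add_comm])
    exact h1.comp hnorm

/-- Cauchy–Plemelj–Sokhotskii on the real line: for a compactly
supported Hölder continuous `φ : ℝ → ℂ` of exponent `α ∈ (0,1]`, the Cauchy integral
`f(z) = (1/2πi)∫ φ(t)/(t − z) dt` is holomorphic off the real axis, vanishes at
infinity, and has one-sided boundary values with jump `f₊ − f₋ = φ`. -/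
theorem stmt16 (α : ℝ) (hα : α ∈ Set.Ioc (0 : ℝ) 1)
    (φ : ℝ → ℂ) (hsupp : HasCompactSupport φ)
    (C : ℝ) (hC : ∀ x y : ℝ, ‖φ x - φ y‖ ≤ C * |x - y| ^ α)
    (f : ℂ → ℂ)
    (hf : ∀ z : ℂ, f z = (1 / (2 * (Real.pi : ℂ) * Complex.I)) * ∫ t : ℝ, φ t / ((t : ℂ) - z)) :
    (∀ z : ℂ, z.im ≠ 0 → DifferentiableAt ℂ f z)
    ∧ Filter.Tendsto f (Bornology.cobounded ℂ) (nhds 0)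
    ∧ ∀ x : ℝ, ∃ fp fm : ℂ,
        Filter.Tendsto (fun ε : ℝ => f ((x : ℂ) + (ε : ℂ) * Complex.I))
          (nhdsWithin 0 (Set.Ioi 0)) (nhds fp)
        ∧ Filter.Tendsto (fun ε : ℝ => f ((x : ℂ) - (ε : ℂ) * Complex.I))
          (nhdsWithin 0 (Set.Ioi 0)) (nhds fm)
        ∧ fp - fm = φ x := by
  obtain ⟨hα1, hα2⟩ := hα
  have hC0 : 0 ≤ C := by
    have h01 := hC 0 1
    have h1 : |(0:ℝ) - 1| ^ α = 1 := by
      rw [show |(0:ℝ) - 1| = 1 by norm_num, Real.one_rpow]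
    rw [h1, mul_one] at h01
    exact le_trans (norm_nonneg _) h01
  have hφ : Continuous φ := holder_cont hα1 hC
  have hfe : f = fun z : ℂ =>
      (1 / (2 * (Real.pi : ℂ) * Complex.I)) * ∫ t : ℝ, φ t / ((t : ℂ) - z) := funext hf
  subst hfe
  refine ⟨?_, ?_, ?_⟩
  · intro z hz
    exact (diff_cauchy hφ hsupp (fun {w} hw => integrable_cauchy hφ hsupp hw) hz).const_mul _
  · have := (cobounded_cauchy hφ hsupp).const_mul (1 / (2 * (Real.pi : ℂ) * Complex.I))
    simpa using this
  · intro x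
    obtain ⟨R₀, hR₀⟩ := hsupp.isCompact.isBounded.subset_closedBall 0
    set R : ℝ := |R₀| + |x| + 1 with hRdef
    have hxR1 : -R < x := by
      have := neg_abs_le x
      have := abs_nonneg R₀
      rw [hRdef]; linarith
    have hxR2 : x < R := by
      have := le_abs_self x
      have := abs_nonneg R₀
      rw [hRdef]; linarith
    have hs : Function.support φ ⊆ Set.Ioc (-R) R := by
      intro t ht
      have h1 := hR₀ (subset_tsupport φ ht)
      rw [Metric.mem_closedBall, Real.dist_eq, sub_zero] at h1
      have h2 : |t| ≤ |R₀| := h1.trans (le_abs_self R₀)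
      constructor
      · have := neg_abs_le t
        have := abs_nonneg x
        rw [hRdef]; linarith
      · have := le_abs_self t
        have := abs_nonneg x
        rw [hRdef]; linarith
    have hπ : (Real.pi : ℂ) ≠ 0 := Complex.ofReal_ne_zero.mpr Real.pi_ne_zero
    refine ⟨(1 / (2 * (Real.pi : ℂ) * Complex.I)) *
        ((∫ t in Set.Ioc (-R) R, (φ t - φ x) / ((t:ℂ) - x))
          + φ x * (((Real.log (R - x) : ℂ)) - ((Real.log (R + x) : ℂ)
            - ((1:ℝ):ℂ)*(Real.pi:ℂ)*Complex.I))),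
      (1 / (2 * (Real.pi : ℂ) * Complex.I)) *
        ((∫ t in Set.Ioc (-R) R, (φ t - φ x) / ((t:ℂ) - x))
          + φ x * (((Real.log (R - x) : ℂ)) - ((Real.log (R + x) : ℂ)
            - ((-1:ℝ):ℂ)*(Real.pi:ℂ)*Complex.I))), ?_, ?_, ?_⟩
    · have h1 := (plemelj_side hα1 hφ hC hC0 x R hxR1 hxR2 hs 1 (Or.inl rfl)).const_mul
        (1 / (2 * (Real.pi : ℂ) * Complex.I))
      have heq : (fun ε : ℝ => (1 / (2 * (Real.pi : ℂ) * Complex.I)) *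
            ∫ t : ℝ, φ t / ((t:ℂ) - ((x:ℂ) + ((1:ℝ):ℂ)*(ε:ℂ)*Complex.I)))
          = fun ε : ℝ => (1 / (2 * (Real.pi : ℂ) * Complex.I)) *
            ∫ t : ℝ, φ t / ((t:ℂ) - ((x:ℂ) + (ε:ℂ)*Complex.I)) := by
        funext ε; norm_num
      rw [heq] at h1
      exact h1
    · have h1 := (plemelj_side hα1 hφ hC hC0 x R hxR1 hxR2 hs (-1) (Or.inr rfl)).const_mul
        (1 / (2 * (Real.pi : ℂ) * Complex.I))
      have heq : (fun ε : ℝ => (1 / (2 * (Real.pi : ℂ) * Complex.I)) *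
            ∫ t : ℝ, φ t / ((t:ℂ) - ((x:ℂ) + ((-1:ℝ):ℂ)*(ε:ℂ)*Complex.I)))
          = fun ε : ℝ => (1 / (2 * (Real.pi : ℂ) * Complex.I)) *
            ∫ t : ℝ, φ t / ((t:ℂ) - ((x:ℂ) - (ε:ℂ)*Complex.I)) := by
        funext ε
        have : (x:ℂ) + ((-1:ℝ):ℂ)*(ε:ℂ)*Complex.I = (x:ℂ) - (ε:ℂ)*Complex.I := by
          push_cast; ring
        rw [this]
      rw [heq] at h1
      exact h1
    · generalize (∫ t in Set.Ioc (-R) R, (φ t - φ x) / ((t:ℂ) - x)) = I1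
      push_cast
      field_simp
      ring
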